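/- Let η ∈ Ξ. For any ε > 0 there exists r > 0 such that for all continuous ℤⁿ-periodic functions F on ℝⁿ, ‖χ_r · η · F‖_{L²(ℝⁿ)} ≤ ε · ‖F‖_{L²([0,1]ⁿ)}, where χ_r is the indicator of the complement of the ball of radius r centered at 0. -/

import Mathlib

open MeasureTheory Filter ComplexConjugate

noncomputable section

/-- The embedding of the integer lattice `ℤⁿ` into `ℝⁿ`. -/
def latt {n : ℕ} (p : Fin n → ℤ) : Fin n → ℝ := fun i => (p i : ℝ)

/-- The periodization of the square modulus of `ξ`. -/
def perSum {n : ℕ} (ξ : (Fin n → ℝ) → ℂ) (x : Fin n → ℝ) : ℝ :=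
  ∑' p : Fin n → ℤ, ‖ξ (x - latt p)‖ ^ 2

/-- Membership in the module `Ξ`: bounded continuous functions whose
periodization of the square modulus is (summable,) uniformly bounded and continuous. -/
def InXi {n : ℕ} (ξ : (Fin n → ℝ) → ℂ) : Prop :=
  Continuous ξ ∧ (∃ M, ∀ x, ‖ξ x‖ ≤ M) ∧
  (∀ x, Summable fun p : Fin n → ℤ => ‖ξ (x - latt p)‖ ^ 2) ∧
  (∃ K, ∀ x, perSum ξ x ≤ K) ∧ Continuous (perSum ξ)

/-- The norm `‖ξ‖_A = sup_x (∑_{p∈ℤⁿ} |ξ(x-p)|²)^{1/2}`. -/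
def normA {n : ℕ} (ξ : (Fin n → ℝ) → ℂ) : ℝ := Real.sqrt (⨆ x, perSum ξ x)

/-- The `C(𝕋ⁿ)`-valued inner product `⟨ξ,η⟩_A(x) = ∑_{p∈ℤⁿ} conj(ξ(x-p)) η(x-p)`. -/
def innerA {n : ℕ} (ξ η : (Fin n → ℝ) → ℂ) (x : Fin n → ℝ) : ℂ :=
  ∑' p : Fin n → ℤ, conj (ξ (x - latt p)) * η (x - latt p)

lemma latt_neg {n : ℕ} (p : Fin n → ℤ) : latt (-p) = -latt p := by
  funext i; simp [latt]

lemma summable_T {n : ℕ} {η : (Fin n → ℝ) → ℂ} (hη : InXi η) (x : Fin n → ℝ) :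
    Summable fun p : Fin n → ℤ => ‖η (x + latt p)‖ ^ 2 := by
  have h := hη.2.2.1 x
  have := (Equiv.neg (Fin n → ℤ)).summable_iff
    (f := fun p : Fin n → ℤ => ‖η (x + latt p)‖ ^ 2)
  rw [← this]
  refine h.congr fun p => ?_
  simp [Function.comp, latt_neg, sub_eq_add_neg]

lemma tsum_T {n : ℕ} {η : (Fin n → ℝ) → ℂ} (hη : InXi η) (x : Fin n → ℝ) :
    ∑' p : Fin n → ℤ, ‖η (x + latt p)‖ ^ 2 = perSum η x := by
  rw [perSum, ← (Equiv.neg (Fin n → ℤ)).tsum_eq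
    (f := fun p : Fin n → ℤ => ‖η (x + latt p)‖ ^ 2)]
  congr 1; funext p; simp [latt_neg, sub_eq_add_neg]

lemma tail_small {n : ℕ} {η : (Fin n → ℝ) → ℂ} (hη : InXi η) {δ : ℝ} (hδ : 0 < δ) :
    ∃ S : Finset (Fin n → ℤ), ∀ x ∈ Set.Icc (0 : Fin n → ℝ) 1,
      ∑' p : {p : Fin n → ℤ // p ∉ S}, ‖η (x + latt p.1)‖ ^ 2 ≤ δ := by
  classical
  set T : (Fin n → ℤ) → (Fin n → ℝ) → ℝ := fun p x => ‖η (x + latt p)‖ ^ 2 with hT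
  have hTcont : ∀ p, Continuous (T p) := fun p =>
    ((hη.1.comp (continuous_id.add continuous_const)).norm.pow 2)
  -- for each x choose a finset with small tail
  have hx : ∀ x : Fin n → ℝ, ∃ S : Finset (Fin n → ℤ),
      ∑' p : {p : Fin n → ℤ // p ∉ S}, T p x < δ := by
    intro x
    have := (tendsto_tsum_compl_atTop_zero (fun p : Fin n → ℤ => T p x)).eventually
      (eventually_lt_nhds hδ)
    exact this.exists
  choose Sx hSx using hx
  -- tail as continuous function
  have htail : ∀ (S : Finset (Fin n → ℤ)) (x : Fin n → ℝ),
      ∑' p : {p : Fin n → ℤ // p ∉ S}, T p x = perSum η x - ∑ p ∈ S, T p x := by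
    intro S x
    have h1 := Summable.sum_add_tsum_compl (s := S) (summable_T hη x)
    have h2 : (∑' p : {p : Fin n → ℤ // p ∉ S}, T p x)
        = ∑' p : ↑((S : Set (Fin n → ℤ))ᶜ), T p.1 x := rfl
    rw [h2]
    rw [tsum_T hη x] at h1
    linarith
  set U : (Fin n → ℝ) → Set (Fin n → ℝ) := fun x =>
    {y | perSum η y - ∑ p ∈ Sx x, T p y < δ} with hU
  have hUopen : ∀ x, IsOpen (U x) := by
    intro x
    have hc : Continuous fun y => perSum η y - ∑ p ∈ Sx x, T p y :=
      hη.2.2.2.2.sub (continuous_finset_sum _ fun p _ => hTcont p)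
    exact isOpen_lt hc continuous_const
  have hUmem : ∀ x ∈ Set.Icc (0 : Fin n → ℝ) 1, U x ∈ nhds x := by
    intro x _
    refine (hUopen x).mem_nhds ?_
    have := hSx x
    rw [htail (Sx x) x] at this
    exact this
  obtain ⟨t, htsub, hcov⟩ := isCompact_Icc.elim_nhds_subcover U hUmem
  refine ⟨t.sup Sx, fun y hy => ?_⟩
  obtain ⟨x, hxt, hyU⟩ := Set.mem_iUnion₂.1 (hcov hy)
  have hsub : Sx x ≤ t.sup Sx := Finset.le_sup (f := Sx) hxt
  -- monotonicity of tails
  have hmono : ∑' p : {p : Fin n → ℤ // p ∉ t.sup Sx}, T p y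
      ≤ ∑' p : {p : Fin n → ℤ // p ∉ Sx x}, T p y := by
    have e1 : (∑' p : {p : Fin n → ℤ // p ∉ t.sup Sx}, T p y)
        = ∑' p : ↑(((t.sup Sx : Finset (Fin n → ℤ)) : Set (Fin n → ℤ))ᶜ), T p.1 y := rfl
    have e2 : (∑' p : {p : Fin n → ℤ // p ∉ Sx x}, T p y)
        = ∑' p : ↑((Sx x : Set (Fin n → ℤ))ᶜ), T p.1 y := rfl
    have e3 := tsum_subtype (((t.sup Sx : Finset (Fin n → ℤ)) : Set (Fin n → ℤ)))ᶜ
      (fun p => T p y)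
    have e4 := tsum_subtype ((Sx x : Set (Fin n → ℤ)))ᶜ (fun p => T p y)
    rw [e1, e2, e3, e4]
    refine Summable.tsum_le_tsum ?_ ((summable_T hη y).indicator _) ((summable_T hη y).indicator _)
    intro p
    by_cases hp : p ∈ t.sup Sx
    · simp only [Set.indicator_apply, Set.mem_compl_iff, Finset.coe_sort_coe,
        Finset.mem_coe, hp, not_true_eq_false, if_false]
      by_cases hp2 : p ∈ Sx x
      · simp [hp2]
      · simp [hp2]; positivity
    · have hp2 : p ∉ Sx x := fun h => hp (hsub h)
      simp [Set.indicator_apply, hp, hp2]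
  have := hSx x
  calc ∑' p : {p : Fin n → ℤ // p ∉ t.sup Sx}, T p y
      ≤ ∑' p : {p : Fin n → ℤ // p ∉ Sx x}, T p y := hmono
    _ = perSum η y - ∑ p ∈ Sx x, T p y := htail _ y
    _ ≤ δ := le_of_lt hyU


/-- For η ∈ Ξ and ε > 0 there is r > 0 such that for every continuous
ℤⁿ-periodic F, ‖χ_r η F‖_{L²(ℝⁿ)} ≤ ε ‖F‖_{L²([0,1]ⁿ)}, where χ_r is the
indicator of the complement of the ball of radius r. -/
theorem stmt16 {n : ℕ} (η : (Fin n → ℝ) → ℂ) (hη : InXi η) :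
    ∀ ε > 0, ∃ r > 0, ∀ F : (Fin n → ℝ) → ℂ,
      Continuous F → (∀ x (p : Fin n → ℤ), F (x + latt p) = F x) →
      Real.sqrt (∫ x in {x : Fin n → ℝ | r ≤ ‖x‖}, ‖η x * F x‖ ^ 2) ≤
        ε * Real.sqrt (∫ x in Set.Icc (0 : Fin n → ℝ) 1, ‖F x‖ ^ 2) := by
  classical
  intro ε hε
  obtain ⟨S, hS⟩ := tail_small hη (show (0:ℝ) < ε ^ 2 by positivity)
  set r : ℝ := 2 + ∑ q ∈ S, ‖latt q‖ with hr
  have hrpos : 0 < r := by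
    have : (0:ℝ) ≤ ∑ q ∈ S, ‖latt q‖ := Finset.sum_nonneg fun q _ => norm_nonneg _
    linarith
  -- geometric fact
  have hgeo : ∀ x ∈ Set.Icc (0 : Fin n → ℝ) 1, ∀ p : Fin n → ℤ,
      r ≤ ‖x + latt p‖ → p ∉ S := by
    intro x hx p hnorm hpS
    have hx1 : ‖x‖ ≤ 1 := by
      rw [pi_norm_le_iff_of_nonneg zero_le_one]
      intro i
      rw [Set.mem_Icc] at hx
      have h0 := hx.1 i
      have h1 := hx.2 i
      simp only [Pi.zero_apply] at h0
      simp only [Pi.one_apply] at h1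
      rw [Real.norm_eq_abs, abs_le]; exact ⟨by linarith, h1⟩
    have hple : ‖latt p‖ ≤ ∑ q ∈ S, ‖latt q‖ :=
      Finset.single_le_sum (fun q _ => norm_nonneg (latt q)) hpS
    have : ‖x + latt p‖ ≤ 1 + ∑ q ∈ S, ‖latt q‖ :=
      (norm_add_le _ _).trans (by linarith)
    linarith
  refine ⟨r, hrpos, fun F hF hper => ?_⟩
  set A : Set (Fin n → ℝ) := {x | r ≤ ‖x‖} with hA
  have hAm : MeasurableSet A := (isClosed_le continuous_const continuous_norm).measurableSet
  set g : (Fin n → ℝ) → ENNReal := fun y => ENNReal.ofReal (‖η y * F y‖ ^ 2) with hgdef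
  have hgm : Measurable g :=
    ENNReal.measurable_ofReal.comp (((hη.1.mul hF).norm.pow 2).measurable)
  set box : Set (Fin n → ℝ) := Set.univ.pi fun _ => Set.Ico (0:ℝ) 1 with hbox
  have hboxm : MeasurableSet box := MeasurableSet.univ_pi fun _ => measurableSet_Ico
  have hboxIcc : box ⊆ Set.Icc (0 : Fin n → ℝ) 1 := by
    intro x hx
    rw [Set.mem_Icc]
    constructor <;> intro i
    · exact (hx i (Set.mem_univ i)).1
    · exact le_of_lt (hx i (Set.mem_univ i)).2
  set s : (Fin n → ℤ) → Set (Fin n → ℝ) := fun p => (fun x => x - latt p) ⁻¹' box with hs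
  have hsm : ∀ p, MeasurableSet (s p) :=
    fun p => hboxm.preimage (measurable_id.sub measurable_const)
  have hdisj : Pairwise (Function.onFun Disjoint s) := by
    intro p q hpq
    show Disjoint (s p) (s q)
    rw [Set.disjoint_left]
    rintro x hxp hxq
    apply hpq
    funext i
    have h1 := hxp i (Set.mem_univ i)
    have h2 := hxq i (Set.mem_univ i)
    simp only [Set.mem_Ico, Pi.sub_apply] at h1 h2
    have e1 : ⌊x i⌋ = p i := Int.floor_eq_iff.mpr ⟨by simpa [latt] using h1.1,
      by have := h1.2; simp only [latt] at this ⊢; push_cast; linarith⟩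
    have e2 : ⌊x i⌋ = q i := Int.floor_eq_iff.mpr ⟨by simpa [latt] using h2.1,
      by have := h2.2; simp only [latt] at this ⊢; push_cast; linarith⟩
    rw [← e1, e2]
  have hcover : (⋃ p, s p) = Set.univ := by
    rw [Set.eq_univ_iff_forall]
    intro x
    refine Set.mem_iUnion.2 ⟨fun i => ⌊x i⌋, fun i _ => ?_⟩
    simp only [Set.mem_Ico, Pi.sub_apply, latt]
    constructor
    · have := Int.floor_le (x i); linarith
    · have := Int.lt_floor_add_one (x i); linarith
  -- the indicator function
  set h : (Fin n → ℝ) → ENNReal := A.indicator g with hh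
  have hhm : Measurable h := hgm.indicator hAm
  -- decomposition
  have step1 : ∫⁻ x in A, g x = ∑' p : Fin n → ℤ, ∫⁻ x in s p, h x := by
    rw [← lintegral_indicator hAm, ← hh, ← setLIntegral_univ (μ := volume) h, ← hcover,
      lintegral_iUnion hsm hdisj]
  have step2 : ∀ p : Fin n → ℤ, ∫⁻ x in s p, h x = ∫⁻ x in box, h (x + latt p) := by
    intro p
    have hmp : MeasurePreserving (· - latt p) (volume : Measure (Fin n → ℝ)) volume :=
      measurePreserving_sub_right volume _
    have := hmp.setLIntegral_comp_preimage_emb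
      (MeasurableEquiv.subRight (latt p)).measurableEmbedding
      (fun y => h (y + latt p)) box
    rw [← this]
    refine lintegral_congr fun x => ?_
    simp
  have step3 : ∑' p : Fin n → ℤ, ∫⁻ x in box, h (x + latt p)
      = ∫⁻ x in box, ∑' p : Fin n → ℤ, h (x + latt p) := by
    refine (lintegral_tsum fun p => ?_).symm
    exact (hhm.comp (measurable_id.add_const (latt p))).aemeasurable
  -- pointwise bound on the box
  have key : ∀ x ∈ box, ∑' p : Fin n → ℤ, h (x + latt p)
      ≤ ENNReal.ofReal (ε ^ 2) * ENNReal.ofReal (‖F x‖ ^ 2) := by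
    intro x hxbox
    have hxIcc : x ∈ Set.Icc (0 : Fin n → ℝ) 1 := hboxIcc hxbox
    set φ : (Fin n → ℤ) → ℝ := fun p => if x + latt p ∈ A then ‖η (x + latt p)‖ ^ 2 else 0
      with hφ
    have hφnonneg : ∀ p, 0 ≤ φ p := by
      intro p; by_cases hp : x + latt p ∈ A <;> simp [hφ, hp] <;> positivity
    have hφle : ∀ p, φ p ≤ ‖η (x + latt p)‖ ^ 2 := by
      intro p; by_cases hp : x + latt p ∈ A <;> simp [hφ, hp] <;> positivity
    have hφsum : Summable φ := Summable.of_nonneg_of_le hφnonneg hφle (summable_T hη x)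
    have hterm : ∀ p : Fin n → ℤ,
        h (x + latt p) = ENNReal.ofReal (φ p) * ENNReal.ofReal (‖F x‖ ^ 2) := by
      intro p
      by_cases hp : x + latt p ∈ A
      · simp only [hh, Set.indicator_of_mem hp, hgdef, hφ, if_pos hp]
        rw [hper x p, norm_mul, mul_pow, ENNReal.ofReal_mul (by positivity)]
      · simp [hh, Set.indicator_of_notMem hp, hφ, if_neg hp]
    have htsum : ∑' p : Fin n → ℤ, h (x + latt p)
        = ENNReal.ofReal (∑' p, φ p) * ENNReal.ofReal (‖F x‖ ^ 2) := by
      rw [ENNReal.ofReal_tsum_of_nonneg hφnonneg hφsum]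
      rw [← ENNReal.tsum_mul_right]
      exact tsum_congr hterm
    rw [htsum]
    refine mul_le_mul_left (ENNReal.ofReal_le_ofReal ?_) _
    -- ∑' φ ≤ ε ^ 2
    have hind : ∀ p, φ p ≤ Set.indicator ((S : Set (Fin n → ℤ))ᶜ)
        (fun q => ‖η (x + latt q)‖ ^ 2) p := by
      intro p
      by_cases hp : x + latt p ∈ A
      · have hpnS : p ∉ S := hgeo x hxIcc p hp
        rw [Set.indicator_of_mem (by simpa using hpnS)]
        exact hφle p
      · rw [hφ]; simp only [if_neg hp]
        exact Set.indicator_nonneg (fun q _ => by positivity) p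
    calc ∑' p, φ p
        ≤ ∑' p, Set.indicator ((S : Set (Fin n → ℤ))ᶜ)
            (fun q => ‖η (x + latt q)‖ ^ 2) p :=
          Summable.tsum_le_tsum hind hφsum ((summable_T hη x).indicator _)
      _ = ∑' p : ↑((S : Set (Fin n → ℤ))ᶜ), ‖η (x + latt p.1)‖ ^ 2 :=
          (tsum_subtype _ _).symm
      _ ≤ ε ^ 2 := hS x hxIcc
  -- assemble the lintegral bound
  have hbound : ∫⁻ x in A, g x
      ≤ ENNReal.ofReal (ε ^ 2) * ∫⁻ x in Set.Icc (0 : Fin n → ℝ) 1,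
          ENNReal.ofReal (‖F x‖ ^ 2) := by
    rw [step1]
    calc ∑' p : Fin n → ℤ, ∫⁻ x in s p, h x
        = ∫⁻ x in box, ∑' p : Fin n → ℤ, h (x + latt p) := by
          rw [← step3]; exact tsum_congr step2
      _ ≤ ∫⁻ x in box, ENNReal.ofReal (ε ^ 2) * ENNReal.ofReal (‖F x‖ ^ 2) := by
          refine setLIntegral_mono (by fun_prop) key
      _ = ENNReal.ofReal (ε ^ 2) * ∫⁻ x in box, ENNReal.ofReal (‖F x‖ ^ 2) := by
          rw [lintegral_const_mul _ (by fun_prop)]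
      _ ≤ _ := by
          exact mul_le_mul_right (lintegral_mono_set hboxIcc) _
  -- finiteness of the RHS
  have hRfin : ∫⁻ x in Set.Icc (0 : Fin n → ℝ) 1, ENNReal.ofReal (‖F x‖ ^ 2) < ⊤ := by
    obtain ⟨C, hC⟩ := isCompact_Icc.exists_bound_of_continuousOn
      (s := Set.Icc (0 : Fin n → ℝ) 1) hF.continuousOn
    calc ∫⁻ x in Set.Icc (0 : Fin n → ℝ) 1, ENNReal.ofReal (‖F x‖ ^ 2)
        ≤ ∫⁻ _ in Set.Icc (0 : Fin n → ℝ) 1, ENNReal.ofReal (C ^ 2) := by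
          refine setLIntegral_mono measurable_const fun x hx => ?_
          refine ENNReal.ofReal_le_ofReal ?_
          have := hC x hx
          have h0 : (0:ℝ) ≤ ‖F x‖ := norm_nonneg _
          nlinarith
      _ = ENNReal.ofReal (C ^ 2) * volume (Set.Icc (0 : Fin n → ℝ) 1) :=
          setLIntegral_const _ _
      _ < ⊤ := ENNReal.mul_lt_top ENNReal.ofReal_lt_top isCompact_Icc.measure_lt_top
  -- convert to Bochner integrals
  have hLeq : ∫ x in A, ‖η x * F x‖ ^ 2 = (∫⁻ x in A, g x).toReal := by
    rw [integral_eq_lintegral_of_nonneg_ae (f := fun x => ‖η x * F x‖ ^ 2) (ae_of_all _ fun x => by positivity)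
      ((hη.1.mul hF).norm.pow 2).aestronglyMeasurable]
  have hReq : ∫ x in Set.Icc (0 : Fin n → ℝ) 1, ‖F x‖ ^ 2
      = (∫⁻ x in Set.Icc (0 : Fin n → ℝ) 1, ENNReal.ofReal (‖F x‖ ^ 2)).toReal := by
    rw [integral_eq_lintegral_of_nonneg_ae (f := fun x => ‖F x‖ ^ 2) (ae_of_all _ fun x => by positivity)
      (hF.norm.pow 2).aestronglyMeasurable]
  rw [hLeq, hReq]
  have hne : ENNReal.ofReal (ε ^ 2) * ∫⁻ x in Set.Icc (0 : Fin n → ℝ) 1,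
      ENNReal.ofReal (‖F x‖ ^ 2) ≠ ⊤ :=
    ENNReal.mul_ne_top ENNReal.ofReal_ne_top hRfin.ne
  have h1 : (∫⁻ x in A, g x).toReal
      ≤ (ENNReal.ofReal (ε ^ 2) * ∫⁻ x in Set.Icc (0 : Fin n → ℝ) 1,
          ENNReal.ofReal (‖F x‖ ^ 2)).toReal :=
    ENNReal.toReal_mono hne hbound
  refine (Real.sqrt_le_sqrt h1).trans ?_
  rw [ENNReal.toReal_mul, ENNReal.toReal_ofReal (by positivity),
    Real.sqrt_mul (by positivity), Real.sqrt_sq hε.le]
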